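/- Let ω, λ, μ ∈ ℂ satisfy μ² = ω² − λ², μ ≠ 0 and ω + λ ≠ 0. A differentiable function f = (f₁, f₂) : (0,∞) → ℂ² satisfies D_{ω,λ} f = 0 on (0,∞) if and only if there exist constants c₁, c₂ ∈ ℂ such that f(x) = c₁ x^μ (−μ, ω+λ) + c₂ x^{−μ} (μ, ω+λ) for all x > 0, where x^{±μ} = exp(±μ log x). -/

import Mathlib

open Set Complex

private lemma cpow_hasDerivAt (μ : ℂ) {x : ℝ} (hx : 0 < x) :
    HasDerivAt (fun y : ℝ => (y : ℂ) ^ μ) (μ * (x : ℂ) ^ (μ - 1)) x :=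
  (Complex.hasStrictDerivAt_cpow_const
    (Complex.ofReal_mem_slitPlane.2 hx)).hasDerivAt.comp_ofReal

private lemma const_of_hasDerivAt_zero {u : ℝ → ℂ}
    (hu : ∀ x ∈ Set.Ioi (0:ℝ), HasDerivAt u 0 x)
    {x y : ℝ} (hx : x ∈ Set.Ioi (0:ℝ)) (hy : y ∈ Set.Ioi (0:ℝ)) : u x = u y := by
  apply (convex_Ioi (0:ℝ)).is_const_of_fderivWithin_eq_zero (𝕜 := ℝ)
    (fun z hz => (hu z hz).differentiableAt.differentiableWithinAt) _ hx hy
  intro z hz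
  rw [fderivWithin_of_isOpen isOpen_Ioi hz, (hu z hz).hasFDerivAt.fderiv]
  ext; simp

theorem diracCoulomb_kernel_characterization (ω lam μ : ℂ)
    (h : μ ^ 2 = ω ^ 2 - lam ^ 2) (hμ : μ ≠ 0) (hωlam : ω + lam ≠ 0)
    (f : ℝ → ℂ × ℂ)
    (hdiff : ∀ x ∈ Set.Ioi (0 : ℝ),
      DifferentiableAt ℝ (fun y => (f y).1) x ∧ DifferentiableAt ℝ (fun y => (f y).2) x) :
    (∀ x ∈ Set.Ioi (0 : ℝ),
        -((lam + ω) / (x : ℂ)) * (f x).1 - deriv (fun y => (f y).2) x = 0 ∧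
        deriv (fun y => (f y).1) x - ((lam - ω) / (x : ℂ)) * (f x).2 = 0) ↔
      ∃ c₁ c₂ : ℂ, ∀ x ∈ Set.Ioi (0 : ℝ),
        f x = (c₁ * (x : ℂ) ^ μ * (-μ) + c₂ * (x : ℂ) ^ (-μ) * μ,
               c₁ * (x : ℂ) ^ μ * (ω + lam) + c₂ * (x : ℂ) ^ (-μ) * (ω + lam)) := by
  constructor
  · intro hode
    set g : ℝ → ℂ := fun y => (y : ℂ) ^ μ * ((ω + lam) * (f y).1 + μ * (f y).2) with hg
    set k : ℝ → ℂ := fun y => (y : ℂ) ^ (-μ) * ((ω + lam) * (f y).1 - μ * (f y).2) with hk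
    have key : ∀ x ∈ Set.Ioi (0:ℝ), HasDerivAt g 0 x ∧ HasDerivAt k 0 x := by
      intro x hx
      have hx0 : (0:ℝ) < x := hx
      have hxC : (x:ℂ) ≠ 0 := by exact_mod_cast hx0.ne'
      have hd1 := (hdiff x hx).1.hasDerivAt
      have hd2 := (hdiff x hx).2.hasDerivAt
      have e2 : deriv (fun y => (f y).2) x = -((lam + ω) / (x : ℂ)) * (f x).1 := by
        linear_combination -(hode x hx).1
      have e1 : deriv (fun y => (f y).1) x = ((lam - ω) / (x : ℂ)) * (f x).2 := by
        linear_combination (hode x hx).2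
      have hp : HasDerivAt (fun y : ℝ => (y : ℂ) ^ μ) (μ * (x : ℂ) ^ (μ - 1)) x :=
        cpow_hasDerivAt μ hx0
      have hq : HasDerivAt (fun y : ℝ => (y : ℂ) ^ (-μ)) (-μ * (x : ℂ) ^ (-μ - 1)) x :=
        cpow_hasDerivAt (-μ) hx0
      have hsub1 : (x : ℂ) ^ (μ - 1) = (x : ℂ) ^ μ / (x : ℂ) := by
        rw [Complex.cpow_sub _ _ hxC, Complex.cpow_one]
      have hsub2 : (x : ℂ) ^ (-μ - 1) = (x : ℂ) ^ (-μ) / (x : ℂ) := by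
        rw [Complex.cpow_sub _ _ hxC, Complex.cpow_one]
      constructor
      · have := hp.mul ((hd1.const_mul (ω + lam)).add (hd2.const_mul μ))
        refine this.congr_deriv ?_
        rw [e1, e2, hsub1]
        simp only [Pi.add_apply, Pi.sub_apply]
        field_simp
        linear_combination ((x:ℂ)^μ * (f x).2) * h
      · have := hq.mul ((hd1.const_mul (ω + lam)).sub (hd2.const_mul μ))
        refine this.congr_deriv ?_
        rw [e1, e2, hsub2]
        simp only [Pi.add_apply, Pi.sub_apply]
        field_simp
        linear_combination ((x:ℂ)^(-μ) * (f x).2) * h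
    obtain ⟨A, hA⟩ : ∃ A, A = g 1 := ⟨_, rfl⟩
    obtain ⟨B, hB⟩ : ∃ B, B = k 1 := ⟨_, rfl⟩
    refine ⟨-B / (2 * μ * (ω + lam)), A / (2 * μ * (ω + lam)), ?_⟩
    intro x hx
    have hx0 : (0:ℝ) < x := hx
    have hxC : (x:ℂ) ≠ 0 := by exact_mod_cast hx0.ne'
    have hone : (1:ℝ) ∈ Set.Ioi (0:ℝ) := by norm_num
    have hinv : (x : ℂ) ^ μ * (x : ℂ) ^ (-μ) = 1 := by
      rw [← Complex.cpow_add _ _ hxC]; simp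
    have hG : (x : ℂ) ^ μ * ((ω + lam) * (f x).1 + μ * (f x).2) = A := by
      rw [hA]; exact const_of_hasDerivAt_zero (fun z hz => (key z hz).1) hx hone
    have hK : (x : ℂ) ^ (-μ) * ((ω + lam) * (f x).1 - μ * (f x).2) = B := by
      rw [hB]; exact const_of_hasDerivAt_zero (fun z hz => (key z hz).2) hx hone
    have hS : (ω + lam) * (f x).1 + μ * (f x).2 = (x:ℂ)^(-μ) * A := by
      calc (ω + lam) * (f x).1 + μ * (f x).2
          = ((x:ℂ)^μ * (x:ℂ)^(-μ)) * ((ω + lam) * (f x).1 + μ * (f x).2) := by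
            rw [hinv, one_mul]
        _ = (x:ℂ)^(-μ) * ((x:ℂ)^μ * ((ω + lam) * (f x).1 + μ * (f x).2)) := by ring
        _ = (x:ℂ)^(-μ) * A := by rw [hG]
    have hT : (ω + lam) * (f x).1 - μ * (f x).2 = (x:ℂ)^μ * B := by
      calc (ω + lam) * (f x).1 - μ * (f x).2
          = ((x:ℂ)^μ * (x:ℂ)^(-μ)) * ((ω + lam) * (f x).1 - μ * (f x).2) := by
            rw [hinv, one_mul]
        _ = (x:ℂ)^μ * ((x:ℂ)^(-μ) * ((ω + lam) * (f x).1 - μ * (f x).2)) := by ring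
        _ = (x:ℂ)^μ * B := by rw [hK]
    refine Prod.ext ?_ ?_ <;> simp only
    · field_simp
      linear_combination hS + hT
    · field_simp
      linear_combination hS - hT
  · rintro ⟨c₁, c₂, hc⟩ x hx
    have hx0 : (0:ℝ) < x := hx
    have hxC : (x:ℂ) ≠ 0 := by exact_mod_cast hx0.ne'
    have hsub1 : (x : ℂ) ^ (μ - 1) = (x : ℂ) ^ μ / (x : ℂ) := by
      rw [Complex.cpow_sub _ _ hxC, Complex.cpow_one]
    have hsub2 : (x : ℂ) ^ (-μ - 1) = (x : ℂ) ^ (-μ) / (x : ℂ) := by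
      rw [Complex.cpow_sub _ _ hxC, Complex.cpow_one]
    have hp : HasDerivAt (fun y : ℝ => (y : ℂ) ^ μ) (μ * (x : ℂ) ^ (μ - 1)) x :=
      cpow_hasDerivAt μ hx0
    have hq : HasDerivAt (fun y : ℝ => (y : ℂ) ^ (-μ)) (-μ * (x : ℂ) ^ (-μ - 1)) x :=
      cpow_hasDerivAt (-μ) hx0
    have hev : ∀ᶠ y in nhds x, y ∈ Set.Ioi (0:ℝ) := Ioi_mem_nhds hx0
    have hev1 : (fun y => (f y).1) =ᶠ[nhds x]
        (fun y : ℝ => c₁ * (y : ℂ) ^ μ * (-μ) + c₂ * (y : ℂ) ^ (-μ) * μ) :=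
      hev.mono fun y hy => by simp only [hc y hy]
    have hev2 : (fun y => (f y).2) =ᶠ[nhds x]
        (fun y : ℝ => c₁ * (y : ℂ) ^ μ * (ω + lam) + c₂ * (y : ℂ) ^ (-μ) * (ω + lam)) :=
      hev.mono fun y hy => by simp only [hc y hy]
    have hD1 : HasDerivAt (fun y : ℝ => c₁ * (y : ℂ) ^ μ * (-μ) + c₂ * (y : ℂ) ^ (-μ) * μ)
        ((c₁ * (μ * (x : ℂ) ^ (μ - 1))) * (-μ) + (c₂ * (-μ * (x : ℂ) ^ (-μ - 1))) * μ) x :=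
      ((hp.const_mul c₁).mul_const (-μ)).add ((hq.const_mul c₂).mul_const μ)
    have hD2 : HasDerivAt (fun y : ℝ => c₁ * (y : ℂ) ^ μ * (ω + lam) +
          c₂ * (y : ℂ) ^ (-μ) * (ω + lam))
        ((c₁ * (μ * (x : ℂ) ^ (μ - 1))) * (ω + lam) +
          (c₂ * (-μ * (x : ℂ) ^ (-μ - 1))) * (ω + lam)) x :=
      ((hp.const_mul c₁).mul_const (ω + lam)).add ((hq.const_mul c₂).mul_const (ω + lam))
    have hd1 : deriv (fun y => (f y).1) x
        = (c₁ * (μ * (x : ℂ) ^ (μ - 1))) * (-μ) + (c₂ * (-μ * (x : ℂ) ^ (-μ - 1))) * μ := by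
      rw [hev1.deriv_eq, hD1.deriv]
    have hd2 : deriv (fun y => (f y).2) x
        = (c₁ * (μ * (x : ℂ) ^ (μ - 1))) * (ω + lam) +
          (c₂ * (-μ * (x : ℂ) ^ (-μ - 1))) * (ω + lam) := by
      rw [hev2.deriv_eq, hD2.deriv]
    rw [hc x hx]
    constructor
    · rw [hd2, hsub1, hsub2]
      field_simp
      ring
    · rw [hd1, hsub1, hsub2]
      field_simp
      linear_combination (-((x:ℂ)^μ*c₁+(x:ℂ)^(-μ)*c₂))*h
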